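/- Fix b ≥ 0 and suppose a* > 0 satisfies ∂J/∂a(a*,b) = 0 (equivalently ψ(a*,b) = 0, where ψ(a,b) = −a·k·(q + q·μ_α·θ(b)) + c·γ(b) + λk·(e^{−μ_α a} − 1)/μ_α). Then ∂²J/∂a²(a*,b) = λ·μ_α·e^{−μ_α a*}·(∂ψ/∂a)(a*,b)/D(a*,b)², where (∂ψ/∂a)(a,b) = −k(q + q·μ_α·θ(b)) − λk·e^{−μ_α a}; in particular ∂²J/∂a²(a*,b) < 0, so every critical point of a ↦ J(a,b) is a strict local maximum. -/

import Mathlib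

private lemma expAux (r x : ℝ) :
    HasDerivAt (fun y => Real.exp (r*y)) (r * Real.exp (r*x)) x := by
  have h := ((hasDerivAt_id x).const_mul r).exp
  simpa [mul_comm] using h

theorem stmt17 (c α lam q μ k : ℝ)
    (hc : 0 < c) (hα0 : 0 < α) (hα1 : α ≤ 1)
    (hlam : 0 < lam) (hq : 0 < q) (hμ : 0 < μ) (hk : 1 ≤ k)
    (Δ Φ ρ : ℝ)
    (hΔ : Δ = (c*μ - α*lam - α*q)^2 + 4*α*c*μ*q)
    (hΦ : Φ = (-(c*μ - α*lam - α*q) + Real.sqrt Δ) / (2*α*c))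
    (hρ : ρ = (-(c*μ - α*lam - α*q) - Real.sqrt Δ) / (2*α*c))
    (hΦpos : 0 < Φ) (hρneg : ρ < 0)
    (γ θf m : ℝ → ℝ) (D J ψ : ℝ → ℝ → ℝ)
    (hγ : ∀ b, γ b = (Φ - ρ)/(Φ*Real.exp (Φ*b) - ρ*Real.exp (ρ*b)))
    (hθf : ∀ b, θf b = (Real.exp (Φ*b) - Real.exp (ρ*b))/(Φ*Real.exp (Φ*b) - ρ*Real.exp (ρ*b)))
    (hm : ∀ a, m a = (1 - Real.exp (-(μ/α)*a)*((μ/α)*a + 1))/(μ/α))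
    (hD : ∀ a b, D a b = q + (μ/α)*q*θf b + lam*Real.exp (-(μ/α)*a))
    (hJ : ∀ a b, J a b = (c*γ b - lam*k*m a)/(D a b))
    (hψ : ∀ a b, ψ a b = -(a*k*(q + q*(μ/α)*θf b)) + c*γ b + lam*k*(Real.exp (-(μ/α)*a) - 1)/(μ/α)) :
    ∀ b : ℝ, 0 ≤ b → ∀ astar : ℝ, 0 < astar →
      deriv (fun a => J a b) astar = 0 →
      deriv (fun a => deriv (fun a' => J a' b) a) astar
          = lam * (μ/α) * Real.exp (-(μ/α)*astar)
            * (-(k*(q + q*(μ/α)*θf b)) - lam*k*Real.exp (-(μ/α)*astar)) / (D astar b)^2 ∧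
      deriv (fun a => deriv (fun a' => J a' b) a) astar < 0 ∧
      ∀ᶠ a in nhdsWithin astar {astar}ᶜ, J a b < J astar b := by
  intro b hb astar hastar hcrit
  have hμα : 0 < μ/α := div_pos hμ hα0
  set μα := μ/α with hμαdef
  have hk0 : 0 < k := lt_of_lt_of_le one_pos hk
  -- θf b ≥ 0
  have hden : 0 < Φ*Real.exp (Φ*b) - ρ*Real.exp (ρ*b) := by
    have h1 : 0 < Φ*Real.exp (Φ*b) := mul_pos hΦpos (Real.exp_pos _)
    have h2 : ρ*Real.exp (ρ*b) < 0 := mul_neg_of_neg_of_pos hρneg (Real.exp_pos _)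
    linarith
  have hθ0 : 0 ≤ θf b := by
    rw [hθf]
    apply div_nonneg _ hden.le
    have h1 : ρ*b ≤ Φ*b := by nlinarith
    have h2 := Real.exp_le_exp.mpr h1
    linarith
  set T := q + μα*q*θf b with hTdef
  have hT : 0 < T := by
    have h1 : 0 ≤ μα*q*θf b := mul_nonneg (mul_nonneg hμα.le hq.le) hθ0
    rw [hTdef]; linarith
  set Cγ := c * γ b with hCγdef
  -- positivity of D
  have hDpos : ∀ a, 0 < D a b := by
    intro a
    rw [hD]
    have := Real.exp_pos (-μα*a)
    nlinarith
  -- ψ in terms of T, Cγ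
  have ψeq : ∀ a, ψ a b = -(a*k*T) + Cγ + lam*k*(Real.exp (-μα*a) - 1)/μα := by
    intro a
    rw [hψ, hTdef, hCγdef]; ring
  -- derivative of m
  have hmder : ∀ a, HasDerivAt m (μα*a*Real.exp (-μα*a)) a := by
    intro a
    have hfun : m = fun x => (1 - Real.exp (-μα*x)*(μα*x + 1))/μα := funext fun x => hm x
    rw [hfun]
    have h1 : HasDerivAt (fun x : ℝ => μα*x + 1) μα a := by
      simpa using ((hasDerivAt_id a).const_mul μα).add_const 1
    have h2 := (expAux (-μα) a).mul h1
    have h3 := ((hasDerivAt_const a (1:ℝ)).sub h2).div_const μα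
    refine h3.congr_deriv ?_
    field_simp
    ring
  -- derivative of D
  have hDder : ∀ a, HasDerivAt (fun x => D x b) (-(lam*μα*Real.exp (-μα*a))) a := by
    intro a
    have hfun : (fun x => D x b) = fun x => T + lam*Real.exp (-μα*x) := by
      funext x; rw [hD, hTdef]
    rw [hfun]
    have h2 := ((expAux (-μα) a).const_mul lam).const_add T
    have h3 : -(lam*μα*Real.exp (-μα*a)) = lam * (-μα * Real.exp (-μα*a)) := by ring
    rw [h3]; exact h2
  -- derivative of ψ
  have hψder : ∀ a, HasDerivAt (fun x => ψ x b) (-(k*T) - lam*k*Real.exp (-μα*a)) a := by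
    intro a
    have hfun : (fun x => ψ x b)
        = fun x => (-(x*(k*T)) + Cγ) + (lam*k)*(Real.exp (-μα*x) - 1)/μα := by
      funext x; rw [ψeq]; ring
    rw [hfun]
    have h1 := (((hasDerivAt_id a).mul_const (k*T)).neg).add_const Cγ
    have h2 := (((expAux (-μα) a).sub_const 1).const_mul (lam*k)).div_const μα
    have h3 := h1.add h2
    refine h3.congr_deriv ?_
    field_simp
    ring
  -- derivative of J
  have hJfun : (fun x => J x b) = fun x => (Cγ - lam*k*m x)/(D x b) := by
    funext x; rw [hJ, hCγdef]
  have hJder : ∀ a, HasDerivAt (fun x => J x b)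
      (lam*μα*Real.exp (-μα*a) * ψ a b / (D a b)^2) a := by
    intro a
    have hN : HasDerivAt (fun x => Cγ - lam*k*m x) (-(lam*k*(μα*a*Real.exp (-μα*a)))) a := by
      simpa using ((hmder a).const_mul (lam*k)).const_sub Cγ
    have hdiv := hN.div (hDder a) (hDpos a).ne'
    rw [hJfun]
    refine hdiv.congr_deriv ?_
    rw [ψeq a, hm a, hD a b]
    have hμα' : μα ≠ 0 := hμα.ne'
    field_simp
    ring
  have hderiv1 : ∀ a, deriv (fun a' => J a' b) a
      = lam*μα*Real.exp (-μα*a) * ψ a b / (D a b)^2 := fun a => (hJder a).deriv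
  -- critical point implies ψ astar b = 0
  have hψ0 : ψ astar b = 0 := by
    have h0 := hcrit
    rw [hderiv1] at h0
    have hD2 : (0:ℝ) < (D astar b)^2 := pow_pos (hDpos astar) 2
    have hepos : 0 < lam*μα*Real.exp (-μα*astar) :=
      mul_pos (mul_pos hlam hμα) (Real.exp_pos _)
    have h1 : lam*μα*Real.exp (-μα*astar) * ψ astar b = 0 :=
      (div_eq_zero_iff.mp h0).resolve_right hD2.ne'
    rcases mul_eq_zero.mp h1 with h | h
    · exact absurd h hepos.ne'
    · exact h
  -- second derivative at astar
  have hg : HasDerivAt (fun a => lam*μα*Real.exp (-μα*a) * ψ a b / (D a b)^2)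
      (lam * μα * Real.exp (-μα*astar)
        * (-(k*T) - lam*k*Real.exp (-μα*astar)) / (D astar b)^2) astar := by
    have hu : HasDerivAt (fun a => lam*μα*Real.exp (-μα*a) * ψ a b)
        ((lam*μα*(-μα*Real.exp (-μα*astar))) * ψ astar b
          + (lam*μα*Real.exp (-μα*astar)) * (-(k*T) - lam*k*Real.exp (-μα*astar))) astar := by
      have h1 := (expAux (-μα) astar).const_mul (lam*μα)
      have h2 := h1.mul (hψder astar)
      exact h2
    have hv : HasDerivAt (fun a => (D a b)^2)
        ((2:ℕ) * (D astar b)^(2-1) * (-(lam*μα*Real.exp (-μα*astar)))) astar :=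
      (hDder astar).pow 2
    have hdiv := hu.div hv (pow_ne_zero 2 (hDpos astar).ne')
    refine hdiv.congr_deriv ?_
    rw [hψ0]
    have hDne : D astar b ≠ 0 := (hDpos astar).ne'
    field_simp
    try ring
  have hfun2 : (fun a => deriv (fun a' => J a' b) a)
      = fun a => lam*μα*Real.exp (-μα*a) * ψ a b / (D a b)^2 := funext hderiv1
  have hsecond : deriv (fun a => deriv (fun a' => J a' b) a) astar
      = lam * μα * Real.exp (-μα*astar)
        * (-(k*T) - lam*k*Real.exp (-μα*astar)) / (D astar b)^2 := by
    rw [hfun2]; exact hg.deriv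
  have hTgoal : lam * μα * Real.exp (-μα*astar)
        * (-(k*T) - lam*k*Real.exp (-μα*astar)) / (D astar b)^2
      = lam * μα * Real.exp (-μα*astar)
        * (-(k*(q + q*μα*θf b)) - lam*k*Real.exp (-μα*astar)) / (D astar b)^2 := by
    rw [hTdef]; ring_nf
  -- negativity
  have hneg : lam * μα * Real.exp (-μα*astar)
      * (-(k*T) - lam*k*Real.exp (-μα*astar)) / (D astar b)^2 < 0 := by
    apply div_neg_of_neg_of_pos _ (pow_pos (hDpos astar) 2)
    apply mul_neg_of_pos_of_neg (mul_pos (mul_pos hlam hμα) (Real.exp_pos _))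
    have h1 : 0 < k*T := mul_pos hk0 hT
    have h2 : 0 < lam*k*Real.exp (-μα*astar) :=
      mul_pos (mul_pos hlam hk0) (Real.exp_pos _)
    linarith
  -- ψ strictly decreasing
  have hψanti : StrictAnti (fun a => ψ a b) := by
    apply strictAnti_of_deriv_neg
    intro x
    rw [(hψder x).deriv]
    have h1 : 0 < k*T := mul_pos hk0 hT
    have h2 : 0 < lam*k*Real.exp (-μα*x) := mul_pos (mul_pos hlam hk0) (Real.exp_pos _)
    linarith
  have hJdiff : Differentiable ℝ (fun a => J a b) := fun x => (hJder x).differentiableAt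
  have hmono : StrictMonoOn (fun a => J a b) (Set.Iic astar) := by
    apply strictMonoOn_of_deriv_pos (convex_Iic astar) hJdiff.continuous.continuousOn
    intro x hx
    rw [interior_Iic] at hx
    rw [hderiv1]
    have hψx : 0 < ψ x b := by
      have := hψanti hx
      simpa [hψ0] using this
    exact div_pos (mul_pos (mul_pos (mul_pos hlam hμα) (Real.exp_pos _)) hψx)
      (pow_pos (hDpos x) 2)
  have hanti : StrictAntiOn (fun a => J a b) (Set.Ici astar) := by
    apply strictAntiOn_of_deriv_neg (convex_Ici astar) hJdiff.continuous.continuousOn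
    intro x hx
    rw [interior_Ici] at hx
    rw [hderiv1]
    have hψx : ψ x b < 0 := by
      have := hψanti hx
      simpa [hψ0] using this
    exact div_neg_of_neg_of_pos
      (mul_neg_of_pos_of_neg (mul_pos (mul_pos hlam hμα) (Real.exp_pos _)) hψx)
      (pow_pos (hDpos x) 2)
  refine ⟨by rw [hsecond, hTgoal], by rw [hsecond]; exact hneg, ?_⟩
  apply eventually_nhdsWithin_of_forall
  intro a ha
  have hne : a ≠ astar := by simpa using ha
  rcases lt_or_gt_of_ne hne with h | h
  · exact hmono (Set.mem_Iic.mpr h.le) Set.self_mem_Iic h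
  · exact hanti Set.self_mem_Ici (Set.mem_Ici.mpr h.le) h
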